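/- (Profiling the always-taker stratum.) Let T be a measurable space, f : S → T measurable, and V := f ∘ X. Under unconfoundedness, positivity, and monotonicity, and assuming P(A0 = 1) > 0, for every measurable set T0 ⊆ T: E[ℓ0(X)·1{V ∈ T0}] = P(A1 = A0 = 1 and V ∈ T0), and consequently P(V ∈ T0 | A1 = A0 = 1) = E[ℓ0(X)·1{V ∈ T0}] / E[ℓ0(X)]. (Under monotonicity the always-taker event {A1 = A0 = 1} coincides almost surely with {A0 = 1}.) -/

import Mathlib

open MeasureTheory ProbabilityTheory
open scoped Classical

set_option maxHeartbeats 1600000 in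
/-- profiling the always-taker stratum: under unconfoundedness, positivity,
monotonicity and P(A0 = 1) > 0, for V := f ∘ X and every measurable T0,
E[ℓ0(X)·1{V ∈ T0}] = P(A1 = A0 = 1, V ∈ T0), and
P(V ∈ T0 | A1 = A0 = 1) = E[ℓ0(X)·1{V ∈ T0}] / E[ℓ0(X)]. -/
theorem stmt_14
    {Ω : Type*} [MeasurableSpace Ω] (P : Measure Ω) [IsProbabilityMeasure P]
    {S : Type*} [mS : MeasurableSpace S]
    {T : Type*} [mT : MeasurableSpace T]
    (X : Ω → S) (hX : Measurable X)
    (f : S → T) (hf : Measurable f)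
    (Z A0 A1 : Ω → ℝ)
    (hZ : Measurable Z) (hA0 : Measurable A0) (hA1 : Measurable A1)
    (hZ01 : ∀ ω, Z ω = 0 ∨ Z ω = 1)
    (hA0_01 : ∀ ω, A0 ω = 0 ∨ A0 ω = 1)
    (hA1_01 : ∀ ω, A1 ω = 0 ∨ A1 ω = 1)
    (A : Ω → ℝ) (hA : A = fun ω => (1 - Z ω) * A0 ω + Z ω * A1 ω)
    (e : S → ℝ) (he : Measurable e) (ε : ℝ) (hε : 0 < ε) (hε2 : ε < 1/2)
    (hebd : ∀ x, ε ≤ e x ∧ e x ≤ 1 - ε)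
    (hVe : ∀ g : S → ℝ, Measurable g → (∃ C, ∀ x, |g x| ≤ C) →
      ∫ ω, Z ω * g (X ω) ∂P = ∫ ω, e (X ω) * g (X ω) ∂P)
    (hUnconf : ∀ ψ : ℝ × ℝ → ℝ, Measurable ψ → (∃ C, ∀ v, |ψ v| ≤ C) →
      ∀ g : S → ℝ, Measurable g → (∃ C, ∀ x, |g x| ≤ C) →
      ∫ ω, Z ω * ψ (A0 ω, A1 ω) * g (X ω) ∂P
        = ∫ ω, e (X ω) * ψ (A0 ω, A1 ω) * g (X ω) ∂P)
    (l0 : S → ℝ) (hl0 : Measurable l0)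
    (hl0v : ∀ g : S → ℝ, Measurable g → (∃ C, ∀ x, |g x| ≤ C) →
      ∫ ω, A ω * (if Z ω = 0 then (1:ℝ) else 0) * g (X ω) ∂P
        = ∫ ω, l0 (X ω) * (if Z ω = 0 then (1:ℝ) else 0) * g (X ω) ∂P)
    (hMono : P {ω | A0 ω ≤ A1 ω} = 1)
    (hAT : 0 < P {ω | A0 ω = 1}) :
    ∀ T0 : Set T, MeasurableSet T0 →
      (∫ ω, l0 (X ω) * (if f (X ω) ∈ T0 then (1:ℝ) else 0) ∂P)
        = (P ({ω | A1 ω = 1 ∧ A0 ω = 1} ∩ {ω | f (X ω) ∈ T0})).toReal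
      ∧ (P ({ω | A1 ω = 1 ∧ A0 ω = 1} ∩ {ω | f (X ω) ∈ T0})).toReal
          / (P {ω | A1 ω = 1 ∧ A0 ω = 1}).toReal
        = (∫ ω, l0 (X ω) * (if f (X ω) ∈ T0 then (1:ℝ) else 0) ∂P)
          / (∫ ω, l0 (X ω) ∂P) := by
  -- bounded measurable functions are integrable
  have intbdd : ∀ F : Ω → ℝ, Measurable F → (∃ C, ∀ ω, |F ω| ≤ C) → Integrable F P := by
    rintro F hF ⟨C, hC⟩
    exact (integrable_const C).mono' hF.aestronglyMeasurable
      (Filter.Eventually.of_forall (fun ω => by simpa using hC ω))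
  have hif : ∀ ω, (if Z ω = 0 then (1:ℝ) else 0) = 1 - Z ω := by
    intro ω; rcases hZ01 ω with h | h <;> simp [h]
  have hZ0le : ∀ ω, 0 ≤ 1 - Z ω := by
    intro ω; rcases hZ01 ω with h | h <;> simp [h]
  have hZabs : ∀ ω, |Z ω| ≤ 1 := by
    intro ω; rcases hZ01 ω with h | h <;> simp [h]
  have hA01 : ∀ ω, A ω = 0 ∨ A ω = 1 := by
    intro ω; rcases hZ01 ω with h | h
    · rcases hA0_01 ω with h0 | h0 <;> simp [hA, h, h0]
    · rcases hA1_01 ω with h1 | h1 <;> simp [hA, h, h1]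
  have hAm : Measurable A := by
    rw [hA]; exact ((measurable_const.sub hZ).mul hA0).add (hZ.mul hA1)
  have hAZ : ∀ ω, A ω * (1 - Z ω) = A0 ω * (1 - Z ω) := by
    intro ω; rcases hZ01 ω with h | h <;> simp [hA, h] <;> ring
  have heabs : ∀ x, |e x| ≤ 1 := by
    intro x; rcases hebd x with ⟨h1, h2⟩
    rw [abs_le]; constructor <;> nlinarith
  -- master: if (1-Z)·h(X) has zero integral for 0/1-valued h, then h(X) = 0 a.e.
  have master : ∀ h : S → ℝ, Measurable h → (∀ x, h x = 0 ∨ h x = 1) →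
      (∫ ω, (1 - Z ω) * h (X ω) ∂P) = 0 → ∀ᵐ ω ∂P, h (X ω) = 0 := by
    intro h hm h01 hzero
    have hb : ∀ x, |h x| ≤ 1 := fun x => by rcases h01 x with h' | h' <;> simp [h']
    have hint : Integrable (fun ω => h (X ω)) P :=
      intbdd _ (hm.comp hX) ⟨1, fun ω => hb (X ω)⟩
    have hintZ : Integrable (fun ω => Z ω * h (X ω)) P :=
      intbdd _ (hZ.mul (hm.comp hX))
        ⟨1, fun ω => by rw [abs_mul]; exact mul_le_one₀ (hZabs ω) (abs_nonneg _) (hb (X ω))⟩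
    have hint1 : Integrable (fun ω => (1 - Z ω) * h (X ω)) P :=
      intbdd _ ((measurable_const.sub hZ).mul (hm.comp hX))
        ⟨2, fun ω => by
          rw [abs_mul]
          have h1 : |1 - Z ω| ≤ 2 := by
            have := hZabs ω; rw [abs_le] at this ⊢; constructor <;> linarith [this.1, this.2]
          nlinarith [abs_nonneg (1 - Z ω), abs_nonneg (h (X ω)), hb (X ω)]⟩
    have hinte : Integrable (fun ω => e (X ω) * h (X ω)) P :=
      intbdd _ ((he.comp hX).mul (hm.comp hX))
        ⟨1, fun ω => by rw [abs_mul]; exact mul_le_one₀ (heabs (X ω)) (abs_nonneg _) (hb (X ω))⟩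
    have hsplit : ∫ ω, h (X ω) ∂P
        = (∫ ω, Z ω * h (X ω) ∂P) + ∫ ω, (1 - Z ω) * h (X ω) ∂P := by
      rw [← integral_add hintZ hint1]
      exact integral_congr_ae (Filter.Eventually.of_forall fun ω => by ring)
    have hVeh := hVe h hm ⟨1, hb⟩
    have hmon : ∫ ω, e (X ω) * h (X ω) ∂P ≤ ∫ ω, (1 - ε) * h (X ω) ∂P := by
      apply integral_mono hinte (intbdd (fun ω => (1 - ε) * h (X ω))
        (measurable_const.mul (hm.comp hX))
        ⟨1, fun ω => by
          rw [abs_mul]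
          have h1 : |1 - ε| ≤ 1 := by rw [abs_le]; constructor <;> linarith
          exact mul_le_one₀ h1 (abs_nonneg _) (hb (X ω))⟩)
      intro ω
      rcases h01 (X ω) with h' | h' <;> simp [h']
      exact (hebd (X ω)).2
    have hnn : 0 ≤ ∫ ω, h (X ω) ∂P :=
      integral_nonneg fun ω => by rcases h01 (X ω) with h' | h' <;> simp [h']
    have hle : ∫ ω, h (X ω) ∂P ≤ (1 - ε) * ∫ ω, h (X ω) ∂P := by
      calc ∫ ω, h (X ω) ∂P
          = (∫ ω, Z ω * h (X ω) ∂P) + ∫ ω, (1 - Z ω) * h (X ω) ∂P := hsplit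
        _ = ∫ ω, e (X ω) * h (X ω) ∂P := by rw [hzero, hVeh, add_zero]
        _ ≤ ∫ ω, (1 - ε) * h (X ω) ∂P := hmon
        _ = (1 - ε) * ∫ ω, h (X ω) ∂P := integral_const_mul _ _
    have hz2 : ∫ ω, h (X ω) ∂P = 0 := by nlinarith
    have := (integral_eq_zero_iff_of_nonneg
      (fun ω => by rcases h01 (X ω) with h' | h' <;> simp [h']) hint).mp hz2
    filter_upwards [this] with ω hω using hω
  -- a.e. upper bound: l0(X) ≤ 1
  have hub : ∀ᵐ ω ∂P, l0 (X ω) ≤ 1 := by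
    have step : ∀ n : ℕ, ∀ᵐ ω ∂P, ¬ (Z ω = 0 ∧ 1 < l0 (X ω) ∧ l0 (X ω) ≤ n) := by
      intro n
      have hsm : MeasurableSet {x : S | 1 < l0 x ∧ l0 x ≤ (n : ℝ)} :=
        (measurableSet_lt measurable_const hl0).inter (measurableSet_le hl0 measurable_const)
      have hgm : Measurable (fun x : S => if 1 < l0 x ∧ l0 x ≤ (n : ℝ) then (1:ℝ) else 0) :=
        Measurable.ite hsm measurable_const measurable_const
      have hgb : ∀ x, |(if 1 < l0 x ∧ l0 x ≤ (n : ℝ) then (1:ℝ) else 0)| ≤ 1 := by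
        intro x; split <;> simp
      have hg01 : ∀ x, (0:ℝ) ≤ (if 1 < l0 x ∧ l0 x ≤ (n : ℝ) then (1:ℝ) else 0) ∧
          (if 1 < l0 x ∧ l0 x ≤ (n : ℝ) then (1:ℝ) else 0) ≤ 1 := by
        intro x; split <;> norm_num
      have heq := hl0v _ hgm ⟨1, hgb⟩
      simp only [hif] at heq
      set g : S → ℝ := fun x => if 1 < l0 x ∧ l0 x ≤ (n : ℝ) then (1:ℝ) else 0 with hgdef
      set φ : Ω → ℝ := fun ω => (l0 (X ω) - 1) * ((1 - Z ω) * g (X ω)) with hφdef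
      have hφnn : ∀ ω, 0 ≤ φ ω := by
        intro ω
        by_cases hc : 1 < l0 (X ω) ∧ l0 (X ω) ≤ (n : ℝ)
        · have hg1 : g (X ω) = 1 := if_pos hc
          have := hZ0le ω
          simp only [hφdef, hg1, mul_one]
          nlinarith [hc.1]
        · have hg0 : g (X ω) = 0 := if_neg hc
          simp [hφdef, hg0]
      have hφm : Measurable φ :=
        ((hl0.comp hX).sub measurable_const).mul
          ((measurable_const.sub hZ).mul (hgm.comp hX))
      have hφbd : ∀ ω, |φ ω| ≤ (n : ℝ) + 1 := by
        intro ω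
        by_cases hc : 1 < l0 (X ω) ∧ l0 (X ω) ≤ (n : ℝ)
        · have hg1 : g (X ω) = 1 := if_pos hc
          rw [abs_of_nonneg (hφnn ω)]
          simp only [hφdef, hg1, mul_one]
          have h1 := hZ0le ω
          have h2 : 1 - Z ω ≤ 1 := by rcases hZ01 ω with h | h <;> simp [h]
          nlinarith [hc.1, hc.2]
        · have hg0 : g (X ω) = 0 := if_neg hc
          simp [hφdef, hg0]
          positivity
      have hφint : Integrable φ P := intbdd _ hφm ⟨(n : ℝ) + 1, hφbd⟩
      -- integrability of pieces
      have hl0gb : ∀ ω, |l0 (X ω) * (1 - Z ω) * g (X ω)| ≤ (n : ℝ) := by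
        intro ω
        by_cases hc : 1 < l0 (X ω) ∧ l0 (X ω) ≤ (n : ℝ)
        · have hg1 : g (X ω) = 1 := if_pos hc
          rw [hg1, mul_one, abs_mul]
          have h1 := hZ0le ω
          have h2 : 1 - Z ω ≤ 1 := by rcases hZ01 ω with h | h <;> simp [h]
          have h3 : |l0 (X ω)| ≤ (n : ℝ) := by rw [abs_le]; constructor <;> nlinarith [hc.1, hc.2]
          have h4 : |1 - Z ω| ≤ 1 := by rw [abs_le]; constructor <;> linarith
          nlinarith [abs_nonneg (l0 (X ω)), abs_nonneg (1 - Z ω)]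
        · have hg0 : g (X ω) = 0 := if_neg hc
          simp [hg0]
      have hint1 : Integrable (fun ω => l0 (X ω) * (1 - Z ω) * g (X ω)) P :=
        intbdd _ (((hl0.comp hX).mul (measurable_const.sub hZ)).mul (hgm.comp hX))
          ⟨(n : ℝ), hl0gb⟩
      have hint2 : Integrable (fun ω => (1 - Z ω) * g (X ω)) P :=
        intbdd _ ((measurable_const.sub hZ).mul (hgm.comp hX))
          ⟨1, fun ω => by
            rw [abs_mul]
            have h2 : |1 - Z ω| ≤ 1 := by
              rw [abs_le]; rcases hZ01 ω with h | h <;> simp [h]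
            exact mul_le_one₀ h2 (abs_nonneg _) (hgb (X ω))⟩
      have hint3 : Integrable (fun ω => A ω * (1 - Z ω) * g (X ω)) P :=
        intbdd _ ((hAm.mul (measurable_const.sub hZ)).mul (hgm.comp hX))
          ⟨1, fun ω => by
            rw [abs_mul, abs_mul]
            have h2 : |1 - Z ω| ≤ 1 := by
              rw [abs_le]; rcases hZ01 ω with h | h <;> simp [h]
            have h3 : |A ω| ≤ 1 := by rcases hA01 ω with h | h <;> simp [h]
            exact mul_le_one₀ (mul_le_one₀ h3 (abs_nonneg _) h2) (abs_nonneg _) (hgb (X ω))⟩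
      have e1 : ∫ ω, φ ω ∂P
          = (∫ ω, l0 (X ω) * (1 - Z ω) * g (X ω) ∂P) - ∫ ω, (1 - Z ω) * g (X ω) ∂P := by
        rw [← integral_sub hint1 hint2]
        exact integral_congr_ae (Filter.Eventually.of_forall fun ω => by
          simp only [hφdef]; ring)
      have e2 : ∫ ω, A ω * (1 - Z ω) * g (X ω) ∂P ≤ ∫ ω, (1 - Z ω) * g (X ω) ∂P := by
        apply integral_mono hint3 hint2
        intro ω
        have h1 := hZ0le ω
        have h2 := (hg01 (X ω)).1
        rcases hA01 ω with h | h <;> simp [h] <;> positivity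
      have e3 : ∫ ω, φ ω ∂P ≤ 0 := by rw [e1, ← heq]; linarith
      have e4 : ∫ ω, φ ω ∂P = 0 := le_antisymm e3 (integral_nonneg hφnn)
      have e5 := (integral_eq_zero_iff_of_nonneg hφnn hφint).mp e4
      filter_upwards [e5] with ω hω
      rintro ⟨hz, h1, h2⟩
      have hg1 : g (X ω) = 1 := if_pos ⟨h1, h2⟩
      have : φ ω = 0 := hω
      simp only [hφdef, hg1, mul_one, hz, sub_zero, one_mul] at this
      linarith
    have hZimp : ∀ᵐ ω ∂P, Z ω = 0 → l0 (X ω) ≤ 1 := by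
      filter_upwards [ae_all_iff.mpr step] with ω hω hz
      by_contra hlt
      push_neg at hlt
      obtain ⟨n, hn⟩ := exists_nat_ge (l0 (X ω))
      exact hω n ⟨hz, hlt, hn⟩
    have hzero : ∫ ω, (1 - Z ω) * (if 1 < l0 (X ω) then (1:ℝ) else 0) ∂P = 0 := by
      have : (fun ω => (1 - Z ω) * (if 1 < l0 (X ω) then (1:ℝ) else 0)) =ᵐ[P]
          (fun _ => (0:ℝ)) := by
        filter_upwards [hZimp] with ω hω
        rcases hZ01 ω with h | h
        · have : ¬ 1 < l0 (X ω) := not_lt.mpr (hω h)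
          simp [this]
        · simp [h]
      rw [integral_congr_ae this, integral_const]
      simp
    have := master (fun x => if 1 < l0 x then 1 else 0)
      (Measurable.ite (measurableSet_lt measurable_const hl0) measurable_const measurable_const)
      (fun x => by by_cases hx : 1 < l0 x <;> simp [hx]) hzero
    filter_upwards [this] with ω hω
    by_contra h
    push_neg at h
    simp [h] at hω
  -- a.e. lower bound: 0 ≤ l0(X)
  have hlb : ∀ᵐ ω ∂P, 0 ≤ l0 (X ω) := by
    have step : ∀ n : ℕ, ∀ᵐ ω ∂P, ¬ (Z ω = 0 ∧ l0 (X ω) < 0 ∧ -(n : ℝ) ≤ l0 (X ω)) := by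
      intro n
      have hsm : MeasurableSet {x : S | l0 x < 0 ∧ -(n : ℝ) ≤ l0 x} :=
        (measurableSet_lt hl0 measurable_const).inter (measurableSet_le measurable_const hl0)
      have hgm : Measurable (fun x : S => if l0 x < 0 ∧ -(n : ℝ) ≤ l0 x then (1:ℝ) else 0) :=
        Measurable.ite hsm measurable_const measurable_const
      have hgb : ∀ x, |(if l0 x < 0 ∧ -(n : ℝ) ≤ l0 x then (1:ℝ) else 0)| ≤ 1 := by
        intro x; split <;> simp
      have heq := hl0v _ hgm ⟨1, hgb⟩
      simp only [hif] at heq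
      set g : S → ℝ := fun x => if l0 x < 0 ∧ -(n : ℝ) ≤ l0 x then (1:ℝ) else 0 with hgdef
      set φ : Ω → ℝ := fun ω => (-(l0 (X ω))) * ((1 - Z ω) * g (X ω)) with hφdef
      have hφnn : ∀ ω, 0 ≤ φ ω := by
        intro ω
        by_cases hc : l0 (X ω) < 0 ∧ -(n : ℝ) ≤ l0 (X ω)
        · have hg1 : g (X ω) = 1 := if_pos hc
          have := hZ0le ω
          simp only [hφdef, hg1, mul_one]
          nlinarith [hc.1]
        · have hg0 : g (X ω) = 0 := if_neg hc
          simp [hφdef, hg0]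
      have hφm : Measurable φ :=
        (hl0.comp hX).neg.mul ((measurable_const.sub hZ).mul (hgm.comp hX))
      have hφbd : ∀ ω, |φ ω| ≤ (n : ℝ) + 1 := by
        intro ω
        by_cases hc : l0 (X ω) < 0 ∧ -(n : ℝ) ≤ l0 (X ω)
        · have hg1 : g (X ω) = 1 := if_pos hc
          rw [abs_of_nonneg (hφnn ω)]
          simp only [hφdef, hg1, mul_one]
          have h1 := hZ0le ω
          have h2 : 1 - Z ω ≤ 1 := by rcases hZ01 ω with h | h <;> simp [h]
          nlinarith [hc.1, hc.2]
        · have hg0 : g (X ω) = 0 := if_neg hc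
          simp [hφdef, hg0]
          positivity
      have hφint : Integrable φ P := intbdd _ hφm ⟨(n : ℝ) + 1, hφbd⟩
      have hl0gb : ∀ ω, |l0 (X ω) * (1 - Z ω) * g (X ω)| ≤ (n : ℝ) := by
        intro ω
        by_cases hc : l0 (X ω) < 0 ∧ -(n : ℝ) ≤ l0 (X ω)
        · have hg1 : g (X ω) = 1 := if_pos hc
          rw [hg1, mul_one, abs_mul]
          have h1 := hZ0le ω
          have h2 : 1 - Z ω ≤ 1 := by rcases hZ01 ω with h | h <;> simp [h]
          have h3 : |l0 (X ω)| ≤ (n : ℝ) := by rw [abs_le]; constructor <;> nlinarith [hc.1, hc.2]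
          have h4 : |1 - Z ω| ≤ 1 := by rw [abs_le]; constructor <;> linarith
          nlinarith [abs_nonneg (l0 (X ω)), abs_nonneg (1 - Z ω)]
        · have hg0 : g (X ω) = 0 := if_neg hc
          simp [hg0]
      have hint1 : Integrable (fun ω => l0 (X ω) * (1 - Z ω) * g (X ω)) P :=
        intbdd _ (((hl0.comp hX).mul (measurable_const.sub hZ)).mul (hgm.comp hX))
          ⟨(n : ℝ), hl0gb⟩
      have hint3nn : (0:ℝ) ≤ ∫ ω, A ω * (1 - Z ω) * g (X ω) ∂P := by
        apply integral_nonneg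
        intro ω
        have h1 := hZ0le ω
        have h2 : (0:ℝ) ≤ g (X ω) := by simp only [hgdef]; split <;> norm_num
        rcases hA01 ω with h | h <;> simp [h] <;> positivity
      have e1 : ∫ ω, φ ω ∂P = -(∫ ω, l0 (X ω) * (1 - Z ω) * g (X ω) ∂P) := by
        rw [← integral_neg]
        exact integral_congr_ae (Filter.Eventually.of_forall fun ω => by
          simp only [hφdef]; ring)
      have e3 : ∫ ω, φ ω ∂P ≤ 0 := by rw [e1, ← heq]; linarith
      have e4 : ∫ ω, φ ω ∂P = 0 := le_antisymm e3 (integral_nonneg hφnn)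
      have e5 := (integral_eq_zero_iff_of_nonneg hφnn hφint).mp e4
      filter_upwards [e5] with ω hω
      rintro ⟨hz, h1, h2⟩
      have hg1 : g (X ω) = 1 := if_pos ⟨h1, h2⟩
      have : φ ω = 0 := hω
      simp only [hφdef, hg1, mul_one, hz, sub_zero, one_mul] at this
      linarith
    have hZimp : ∀ᵐ ω ∂P, Z ω = 0 → 0 ≤ l0 (X ω) := by
      filter_upwards [ae_all_iff.mpr step] with ω hω hz
      by_contra hlt
      push_neg at hlt
      obtain ⟨n, hn⟩ := exists_nat_ge (-(l0 (X ω)))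
      exact hω n ⟨hz, hlt, by linarith⟩
    have hzero : ∫ ω, (1 - Z ω) * (if l0 (X ω) < 0 then (1:ℝ) else 0) ∂P = 0 := by
      have : (fun ω => (1 - Z ω) * (if l0 (X ω) < 0 then (1:ℝ) else 0)) =ᵐ[P]
          (fun _ => (0:ℝ)) := by
        filter_upwards [hZimp] with ω hω
        rcases hZ01 ω with h | h
        · have : ¬ l0 (X ω) < 0 := not_lt.mpr (hω h)
          simp [this]
        · simp [h]
      rw [integral_congr_ae this, integral_const]
      simp
    have := master (fun x => if l0 x < 0 then 1 else 0)
      (Measurable.ite (measurableSet_lt hl0 measurable_const) measurable_const measurable_const)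
      (fun x => by by_cases hx : l0 x < 0 <;> simp [hx]) hzero
    filter_upwards [this] with ω hω
    by_contra h
    push_neg at h
    simp [h] at hω
  -- the truncated version of l0
  set l0' : S → ℝ := fun x => max 0 (min (l0 x) 1) with hl0'def
  have hl0'm : Measurable l0' := measurable_const.max (hl0.min measurable_const)
  have hl0'bd : ∀ x, |l0' x| ≤ 1 := by
    intro x
    rw [abs_le]
    constructor
    · exact le_trans (by norm_num) (le_max_left _ _)
    · exact max_le zero_le_one (min_le_right _ _)
  have l0ae : ∀ᵐ ω ∂P, l0 (X ω) = l0' (X ω) := by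
    filter_upwards [hub, hlb] with ω h1 h2
    simp only [hl0'def]
    rw [min_eq_left h1, max_eq_right h2]
  -- flip: convert (1-Z)-integrals to (1-e)-integrals
  have flip : ∀ F : Ω → ℝ, Measurable F → (∃ C, ∀ ω, |F ω| ≤ C) →
      (∫ ω, Z ω * F ω ∂P = ∫ ω, e (X ω) * F ω ∂P) →
      ∫ ω, (1 - Z ω) * F ω ∂P = ∫ ω, (1 - e (X ω)) * F ω ∂P := by
    rintro F hF ⟨C, hC⟩ hEq
    have hintF : Integrable F P := intbdd F hF ⟨C, hC⟩
    have hintZF : Integrable (fun ω => Z ω * F ω) P :=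
      intbdd _ (hZ.mul hF) ⟨C, fun ω => by
        rw [abs_mul]
        calc |Z ω| * |F ω| ≤ 1 * C :=
              mul_le_mul (hZabs ω) (hC ω) (abs_nonneg _) zero_le_one
          _ = C := one_mul C⟩
    have hinteF : Integrable (fun ω => e (X ω) * F ω) P :=
      intbdd _ ((he.comp hX).mul hF) ⟨C, fun ω => by
        rw [abs_mul]
        calc |e (X ω)| * |F ω| ≤ 1 * C :=
              mul_le_mul (heabs (X ω)) (hC ω) (abs_nonneg _) zero_le_one
          _ = C := one_mul C⟩
    have h1 : ∫ ω, (1 - Z ω) * F ω ∂P = (∫ ω, F ω ∂P) - ∫ ω, Z ω * F ω ∂P := by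
      rw [← integral_sub hintF hintZF]
      exact integral_congr_ae (Filter.Eventually.of_forall fun ω => by ring)
    have h2 : ∫ ω, (1 - e (X ω)) * F ω ∂P = (∫ ω, F ω ∂P) - ∫ ω, e (X ω) * F ω ∂P := by
      rw [← integral_sub hintF hinteF]
      exact integral_congr_ae (Filter.Eventually.of_forall fun ω => by ring)
    rw [h1, h2, hEq]
  -- key identity: ∫ l0(X) g(X) = ∫ A0 g(X) for bounded measurable g
  have key : ∀ g : S → ℝ, Measurable g → (∃ C, ∀ x, |g x| ≤ C) →
      ∫ ω, l0 (X ω) * g (X ω) ∂P = ∫ ω, A0 ω * g (X ω) ∂P := by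
    rintro g hg ⟨C, hC⟩
    set C' : ℝ := max C 0 with hC'def
    have hC' : ∀ x, |g x| ≤ C' := fun x => (hC x).trans (le_max_left _ _)
    have hC'0 : (0:ℝ) ≤ C' := le_max_right _ _
    set g₁ : S → ℝ := fun x => g x * (1 - e x)⁻¹ with hg₁def
    have h1e : ∀ x, ε ≤ 1 - e x := fun x => by have := (hebd x).2; linarith
    have h1epos : ∀ x, 0 < 1 - e x := fun x => lt_of_lt_of_le hε (h1e x)
    have h1ene : ∀ x, (1:ℝ) - e x ≠ 0 := fun x => ne_of_gt (h1epos x)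
    have hg₁m : Measurable g₁ := hg.mul ((measurable_const.sub he).inv)
    have hg₁b : ∀ x, |g₁ x| ≤ C' * ε⁻¹ := by
      intro x
      simp only [hg₁def]
      rw [abs_mul]
      refine mul_le_mul (hC' x) ?_ (abs_nonneg _) hC'0
      rw [abs_inv, abs_of_pos (h1epos x)]
      exact inv_anti₀ hε (h1e x)
    have hGb : ∀ x, |l0' x * g₁ x| ≤ C' * ε⁻¹ := by
      intro x
      rw [abs_mul]
      calc |l0' x| * |g₁ x| ≤ 1 * (C' * ε⁻¹) :=
            mul_le_mul (hl0'bd x) (hg₁b x) (abs_nonneg _) zero_le_one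
        _ = C' * ε⁻¹ := one_mul _
    have hA0b : ∀ ω, |A0 ω| ≤ 1 := fun ω => by rcases hA0_01 ω with h | h <;> simp [h]
    have hF2b : ∀ ω, |A0 ω * g₁ (X ω)| ≤ C' * ε⁻¹ := by
      intro ω
      rw [abs_mul]
      calc |A0 ω| * |g₁ (X ω)| ≤ 1 * (C' * ε⁻¹) :=
            mul_le_mul (hA0b ω) (hg₁b (X ω)) (abs_nonneg _) zero_le_one
        _ = C' * ε⁻¹ := one_mul _
    have hVeG : ∫ ω, Z ω * (l0' (X ω) * g₁ (X ω)) ∂P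
        = ∫ ω, e (X ω) * (l0' (X ω) * g₁ (X ω)) ∂P :=
      hVe (fun x => l0' x * g₁ x) (hl0'm.mul hg₁m) ⟨C' * ε⁻¹, hGb⟩
    have hflip1 := flip (fun ω => l0' (X ω) * g₁ (X ω))
      ((hl0'm.comp hX).mul (hg₁m.comp hX)) ⟨C' * ε⁻¹, fun ω => hGb (X ω)⟩ hVeG
    have hpsi : Measurable (fun v : ℝ × ℝ => max 0 (min v.1 1)) :=
      measurable_const.max (measurable_fst.min measurable_const)
    have hpsib : ∀ v : ℝ × ℝ, |max 0 (min v.1 1)| ≤ 1 := by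
      intro v
      rw [abs_le]
      constructor
      · exact le_trans (by norm_num) (le_max_left _ _)
      · exact max_le zero_le_one (min_le_right _ _)
    have hpsiA : ∀ ω, max (0:ℝ) (min (A0 ω) 1) = A0 ω := fun ω => by
      rcases hA0_01 ω with h | h <;> simp [h]
    have hUn := hUnconf (fun v => max 0 (min v.1 1)) hpsi ⟨1, hpsib⟩ g₁ hg₁m ⟨C' * ε⁻¹, hg₁b⟩
    have hUn' : ∫ ω, Z ω * (A0 ω * g₁ (X ω)) ∂P
        = ∫ ω, e (X ω) * (A0 ω * g₁ (X ω)) ∂P := by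
      calc ∫ ω, Z ω * (A0 ω * g₁ (X ω)) ∂P
          = ∫ ω, Z ω * max 0 (min (A0 ω) 1) * g₁ (X ω) ∂P :=
            integral_congr_ae (Filter.Eventually.of_forall fun ω => by
              dsimp only; rw [hpsiA ω]; ring)
        _ = ∫ ω, e (X ω) * max 0 (min (A0 ω) 1) * g₁ (X ω) ∂P := hUn
        _ = ∫ ω, e (X ω) * (A0 ω * g₁ (X ω)) ∂P :=
            integral_congr_ae (Filter.Eventually.of_forall fun ω => by
              dsimp only; rw [hpsiA ω]; ring)
    have hflip2 := flip (fun ω => A0 ω * g₁ (X ω)) (hA0.mul (hg₁m.comp hX))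
      ⟨C' * ε⁻¹, hF2b⟩ hUn'
    have hl0v1 := hl0v g₁ hg₁m ⟨C' * ε⁻¹, hg₁b⟩
    simp only [hif] at hl0v1
    calc ∫ ω, l0 (X ω) * g (X ω) ∂P
        = ∫ ω, l0' (X ω) * g (X ω) ∂P :=
          integral_congr_ae (by filter_upwards [l0ae] with ω h; rw [h])
      _ = ∫ ω, (1 - e (X ω)) * (l0' (X ω) * g₁ (X ω)) ∂P :=
          integral_congr_ae (Filter.Eventually.of_forall fun ω => by
            show l0' (X ω) * g (X ω)
              = (1 - e (X ω)) * (l0' (X ω) * (g (X ω) * (1 - e (X ω))⁻¹))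
            rw [show (1 - e (X ω)) * (l0' (X ω) * (g (X ω) * (1 - e (X ω))⁻¹))
                = l0' (X ω) * g (X ω) * ((1 - e (X ω)) * (1 - e (X ω))⁻¹) from by ring,
              mul_inv_cancel₀ (h1ene (X ω)), mul_one])
      _ = ∫ ω, (1 - Z ω) * (l0' (X ω) * g₁ (X ω)) ∂P := hflip1.symm
      _ = ∫ ω, l0 (X ω) * (1 - Z ω) * g₁ (X ω) ∂P :=
          integral_congr_ae (by filter_upwards [l0ae] with ω h; rw [h]; ring)
      _ = ∫ ω, A ω * (1 - Z ω) * g₁ (X ω) ∂P := hl0v1.symm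
      _ = ∫ ω, (1 - Z ω) * (A0 ω * g₁ (X ω)) ∂P :=
          integral_congr_ae (Filter.Eventually.of_forall fun ω => by
            linear_combination g₁ (X ω) * hAZ ω)
      _ = ∫ ω, (1 - e (X ω)) * (A0 ω * g₁ (X ω)) ∂P := hflip2
      _ = ∫ ω, A0 ω * g (X ω) ∂P :=
          integral_congr_ae (Filter.Eventually.of_forall fun ω => by
            show (1 - e (X ω)) * (A0 ω * (g (X ω) * (1 - e (X ω))⁻¹))
              = A0 ω * g (X ω)
            rw [show (1 - e (X ω)) * (A0 ω * (g (X ω) * (1 - e (X ω))⁻¹))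
                = A0 ω * g (X ω) * ((1 - e (X ω)) * (1 - e (X ω))⁻¹) from by ring,
              mul_inv_cancel₀ (h1ene (X ω)), mul_one])
  -- integrals of 0/1-valued functions are probabilities
  have indInt : ∀ B : Ω → ℝ, Measurable B → (∀ ω, B ω = 0 ∨ B ω = 1) →
      ∫ ω, B ω ∂P = (P {ω | B ω = 1}).toReal := by
    intro B hB h01
    have hms : MeasurableSet {ω | B ω = 1} := hB (measurableSet_singleton 1)
    rw [← Measure.real_def, ← integral_indicator_one hms]
    apply integral_congr_ae (Filter.Eventually.of_forall fun ω => ?_)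
    rcases h01 ω with h | h
    · have hnm : ω ∉ {ω | B ω = 1} := by
        intro hc
        have hc' : B ω = 1 := hc
        rw [h] at hc'
        norm_num at hc'
      rw [h, Set.indicator_of_notMem hnm]
    · have hm : ω ∈ {ω | B ω = 1} := h
      rw [h, Set.indicator_of_mem hm]
      rfl
  -- monotonicity a.e. and set identification
  have haemono : ∀ᵐ ω ∂P, A0 ω ≤ A1 ω := by
    have hms : MeasurableSet {ω | A0 ω ≤ A1 ω} := measurableSet_le hA0 hA1
    have hcomp : P {ω | A0 ω ≤ A1 ω}ᶜ = 0 := by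
      rw [measure_compl hms (measure_ne_top _ _), hMono, measure_univ]
      simp
    rw [ae_iff]
    simpa [Set.compl_setOf] using hcomp
  have hPset : ∀ s : Set Ω, P ({ω | A1 ω = 1 ∧ A0 ω = 1} ∩ s) = P ({ω | A0 ω = 1} ∩ s) := by
    intro s
    apply measure_congr
    rw [Filter.eventuallyEq_set]
    filter_upwards [haemono] with ω hω
    simp only [Set.mem_inter_iff, Set.mem_setOf_eq]
    constructor
    · rintro ⟨⟨_, h0⟩, hs⟩; exact ⟨h0, hs⟩
    · rintro ⟨h0, hs⟩
      refine ⟨⟨?_, h0⟩, hs⟩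
      rcases hA1_01 ω with h | h
      · rw [h0, h] at hω; linarith
      · exact h
  -- main conclusion
  intro T0 hT0
  have hgm : Measurable (fun x : S => if f x ∈ T0 then (1:ℝ) else 0) :=
    Measurable.ite (hf hT0) measurable_const measurable_const
  have hkey := key (fun x => if f x ∈ T0 then (1:ℝ) else 0) hgm
    ⟨1, fun x => by split <;> simp⟩
  have hBset : {ω | A0 ω * (if f (X ω) ∈ T0 then (1:ℝ) else 0) = 1}
      = {ω | A0 ω = 1} ∩ {ω | f (X ω) ∈ T0} := by
    ext ω
    simp only [Set.mem_setOf_eq, Set.mem_inter_iff]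
    constructor
    · intro h
      by_cases h2 : f (X ω) ∈ T0
      · rw [if_pos h2, mul_one] at h; exact ⟨h, h2⟩
      · rw [if_neg h2, mul_zero] at h; exact absurd h (by norm_num)
    · rintro ⟨h1, h2⟩; rw [if_pos h2, h1, mul_one]
  have hA0g : ∫ ω, A0 ω * (if f (X ω) ∈ T0 then (1:ℝ) else 0) ∂P
      = (P ({ω | A0 ω = 1} ∩ {ω | f (X ω) ∈ T0})).toReal := by
    rw [← hBset]
    apply indInt _ (hA0.mul (hgm.comp hX))
    intro ω
    rcases hA0_01 ω with h | h
    · left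
      show A0 ω * (if f (X ω) ∈ T0 then (1:ℝ) else 0) = 0
      rw [h, zero_mul]
    · by_cases h2 : f (X ω) ∈ T0
      · right
        show A0 ω * (if f (X ω) ∈ T0 then (1:ℝ) else 0) = 1
        rw [if_pos h2, h, mul_one]
      · left
        show A0 ω * (if f (X ω) ∈ T0 then (1:ℝ) else 0) = 0
        rw [if_neg h2, mul_zero]
  have num : (∫ ω, l0 (X ω) * (if f (X ω) ∈ T0 then (1:ℝ) else 0) ∂P)
      = (P ({ω | A1 ω = 1 ∧ A0 ω = 1} ∩ {ω | f (X ω) ∈ T0})).toReal := by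
    calc (∫ ω, l0 (X ω) * (if f (X ω) ∈ T0 then (1:ℝ) else 0) ∂P)
        = ∫ ω, A0 ω * (if f (X ω) ∈ T0 then (1:ℝ) else 0) ∂P := hkey
      _ = (P ({ω | A0 ω = 1} ∩ {ω | f (X ω) ∈ T0})).toReal := hA0g
      _ = (P ({ω | A1 ω = 1 ∧ A0 ω = 1} ∩ {ω | f (X ω) ∈ T0})).toReal := by
          rw [hPset]
  have hden : ∫ ω, l0 (X ω) ∂P = (P {ω | A1 ω = 1 ∧ A0 ω = 1}).toReal := by
    have h1 : ∫ ω, l0 (X ω) ∂P = ∫ ω, A0 ω ∂P := by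
      have := key (fun _ => (1:ℝ)) measurable_const ⟨1, fun x => by norm_num⟩
      simpa using this
    have h2 : ∫ ω, A0 ω ∂P = (P {ω | A0 ω = 1}).toReal := indInt A0 hA0 hA0_01
    have h3 : P {ω | A1 ω = 1 ∧ A0 ω = 1} = P {ω | A0 ω = 1} := by
      have := hPset Set.univ
      simpa using this
    rw [h1, h2, h3]
  exact ⟨num, by rw [num, hden]⟩
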